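/- Let U ⊆ ℝ² be open and w : U → ℝ a smooth solution of the reduced equation with ∂₁∂₂²w ≠ 0 on U. Write ζ := ∂₁∂₂w + ½(∂₂²w)². Then: (i) the pair F¹ := (∂₂²w)⁵/(24·∂₁∂₂²w) + ½(∂₂w)(∂₂²w)², F² := (∂₂²w)⁶/(24·∂₁∂₂²w) − z₂ζ² + (1/3)(∂₂w)(∂₂²w)³ + (∂₁w)·ζ satisfies ∂₁F¹ + ∂₂F² = 0 on U; and (ii) the pair F¹ := −((∂₂²w)⁵/(24·∂₁∂₂²w))·(z₁ + ∂₂²w/(3·∂₁∂₂²w)) − ½(∂₂w)·(z₁(∂₂²w)² + ∂₂w), F² := −((∂₂²w)⁶/(24·∂₁∂₂²w))·(z₁ + ∂₂²w/(3·∂₁∂₂²w)) + z₁z₂ζ² − (1/3)z₁(∂₂w)(∂₂²w)³ − z₁(∂₁w)·ζ + w·ζ satisfies ∂₁F¹ + ∂₂F² = 0 on U. -/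

import Mathlib

/-- First-coordinate partial derivative of a function on `ℝ²`. -/
noncomputable def d1 (f : ℝ × ℝ → ℝ) (p : ℝ × ℝ) : ℝ := deriv (fun s => f (s, p.2)) p.1

/-- Second-coordinate partial derivative of a function on `ℝ²`. -/
noncomputable def d2 (f : ℝ × ℝ → ℝ) (p : ℝ × ℝ) : ℝ := deriv (fun s => f (p.1, s)) p.2

/-- `w` is a smooth solution of the reduced equation `∂₁∂₂²w + (∂₂²w)·(∂₂³w) = 0` on `U`. -/
def IsRedSolOn (w : ℝ × ℝ → ℝ) (U : Set (ℝ × ℝ)) : Prop :=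
  ContDiffOn ℝ (⊤ : ℕ∞) w U ∧
    ∀ p ∈ U, d1 (d2 (d2 w)) p + d2 (d2 w) p * d2 (d2 (d2 w)) p = 0

/-- `h` is a smooth solution of the inviscid Burgers equation `∂₁h + h·∂₂h = 0` on `U`. -/
def IsBurgersSolOn (h : ℝ × ℝ → ℝ) (U : Set (ℝ × ℝ)) : Prop :=
  ContDiffOn ℝ (⊤ : ℕ∞) h U ∧ ∀ p ∈ U, d1 h p + h p * d2 h p = 0

/-- The lowest-order `z₂`-integral `ζ = ∂₁∂₂w + ½(∂₂²w)²` of the reduced equation. -/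
noncomputable def zetaInt (w : ℝ × ℝ → ℝ) (p : ℝ × ℝ) : ℝ :=
  d1 (d2 w) p + (1 / 2) * (d2 (d2 w) p) ^ 2

/-- `θ⁰ = z₂ − z₁·∂₂²w`. -/
noncomputable def theta0 (w : ℝ × ℝ → ℝ) (p : ℝ × ℝ) : ℝ := p.2 - p.1 * d2 (d2 w) p

/-- `θ¹ = ∂₂²w/∂₁∂₂²w + z₁`. -/
noncomputable def theta1 (w : ℝ × ℝ → ℝ) (p : ℝ × ℝ) : ℝ :=
  d2 (d2 w) p / d1 (d2 (d2 w)) p + p.1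

/-- `θ² = (∂₂²w/∂₁∂₂²w)·∂₂θ¹`. -/
noncomputable def theta2 (w : ℝ × ℝ → ℝ) (p : ℝ × ℝ) : ℝ :=
  d2 (d2 w) p / d1 (d2 (d2 w)) p * d2 (theta1 w) p

/-- `f` satisfies the generalized-symmetry condition
`∂₂(∂₁(∂₂f) + (∂₂²w)·∂₂(∂₂f)) = 0` of the reduced equation along the solution `w` on `U`. -/
def IsGenSymCharOn (w f : ℝ × ℝ → ℝ) (U : Set (ℝ × ℝ)) : Prop :=
  ∀ p ∈ U, d2 (fun q => d1 (d2 f) q + d2 (d2 w) q * d2 (d2 f) q) p = 0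

lemma aux_le1 : (1:WithTop ℕ∞) ≤ ((⊤:ℕ∞):WithTop ℕ∞) := by
  exact_mod_cast (le_top : (1:ℕ∞) ≤ ⊤)

lemma aux_hd1 {f : ℝ × ℝ → ℝ} {p : ℝ × ℝ} (hf : DifferentiableAt ℝ f p) :
    HasDerivAt (fun s => f (s, p.2)) (fderiv ℝ f p (1, 0)) p.1 := by
  have h2 : HasDerivAt (fun s : ℝ => ((s, p.2) : ℝ × ℝ)) (1, 0) p.1 :=
    HasDerivAt.prodMk (hasDerivAt_id p.1) (hasDerivAt_const p.1 p.2)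
  exact hf.hasFDerivAt.comp_hasDerivAt p.1 h2

lemma aux_hd2 {f : ℝ × ℝ → ℝ} {p : ℝ × ℝ} (hf : DifferentiableAt ℝ f p) :
    HasDerivAt (fun s => f (p.1, s)) (fderiv ℝ f p (0, 1)) p.2 := by
  have h2 : HasDerivAt (fun s : ℝ => ((p.1, s) : ℝ × ℝ)) (0, 1) p.2 :=
    HasDerivAt.prodMk (hasDerivAt_const p.2 p.1) (hasDerivAt_id p.2)
  exact hf.hasFDerivAt.comp_hasDerivAt p.2 h2

lemma d1_eq {f : ℝ × ℝ → ℝ} {p : ℝ × ℝ} (hf : DifferentiableAt ℝ f p) :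
    d1 f p = fderiv ℝ f p (1, 0) := (aux_hd1 hf).deriv

lemma d2_eq {f : ℝ × ℝ → ℝ} {p : ℝ × ℝ} (hf : DifferentiableAt ℝ f p) :
    d2 f p = fderiv ℝ f p (0, 1) := (aux_hd2 hf).deriv

/-- slice derivative, direction 1 -/
lemma sd1 {f : ℝ × ℝ → ℝ} {p : ℝ × ℝ} (hf : ContDiffAt ℝ (⊤:ℕ∞) f p) :
    HasDerivAt (fun s => f (s, p.2)) (d1 f p) p.1 := by
  have hd := hf.differentiableAt (by simp)
  rw [d1_eq hd]; exact aux_hd1 hd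

/-- slice derivative, direction 2 -/
lemma sd2 {f : ℝ × ℝ → ℝ} {p : ℝ × ℝ} (hf : ContDiffAt ℝ (⊤:ℕ∞) f p) :
    HasDerivAt (fun s => f (p.1, s)) (d2 f p) p.2 := by
  have hd := hf.differentiableAt (by simp)
  rw [d2_eq hd]; exact aux_hd2 hd

lemma d1_congr {f g : ℝ × ℝ → ℝ} {p : ℝ × ℝ} (h : f =ᶠ[nhds p] g) : d1 f p = d1 g p := by
  have hc : Filter.Tendsto (fun s : ℝ => ((s, p.2) : ℝ × ℝ)) (nhds p.1) (nhds p) := by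
    have := (continuous_id.prodMk continuous_const :
      Continuous fun s : ℝ => ((s, p.2) : ℝ × ℝ)).tendsto p.1
    simpa using this
  exact Filter.EventuallyEq.deriv_eq (h.comp_tendsto hc)

lemma d2_congr {f g : ℝ × ℝ → ℝ} {p : ℝ × ℝ} (h : f =ᶠ[nhds p] g) : d2 f p = d2 g p := by
  have hc : Filter.Tendsto (fun s : ℝ => ((p.1, s) : ℝ × ℝ)) (nhds p.2) (nhds p) := by
    have := (continuous_const.prodMk continuous_id :
      Continuous fun s : ℝ => ((p.1, s) : ℝ × ℝ)).tendsto p.2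
    simpa using this
  exact Filter.EventuallyEq.deriv_eq (h.comp_tendsto hc)

lemma eventually_diff {f : ℝ × ℝ → ℝ} {p : ℝ × ℝ} (hf : ContDiffAt ℝ (⊤:ℕ∞) f p) :
    ∀ᶠ q in nhds p, DifferentiableAt ℝ f q := by
  obtain ⟨u, hu, h'u⟩ : ∃ u ∈ nhds p, ContDiffOn ℝ 1 f u :=
    hf.contDiffOn (m := 1) (by exact_mod_cast (le_top : (1:ℕ∞) ≤ ⊤)) (by simp)
  rcases mem_nhds_iff.1 hu with ⟨v, vu, v_open, xv⟩
  filter_upwards [v_open.mem_nhds xv] with y hy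
  exact ((h'u.mono vu y hy).contDiffAt (v_open.mem_nhds hy)).differentiableAt one_ne_zero

lemma d1_eventually_eq {f : ℝ × ℝ → ℝ} {p : ℝ × ℝ} (hf : ContDiffAt ℝ (⊤:ℕ∞) f p) :
    d1 f =ᶠ[nhds p] fun q => fderiv ℝ f q (1, 0) := by
  filter_upwards [eventually_diff hf] with q hq using d1_eq hq

lemma d2_eventually_eq {f : ℝ × ℝ → ℝ} {p : ℝ × ℝ} (hf : ContDiffAt ℝ (⊤:ℕ∞) f p) :
    d2 f =ᶠ[nhds p] fun q => fderiv ℝ f q (0, 1) := by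
  filter_upwards [eventually_diff hf] with q hq using d2_eq hq

lemma contDiffAt_fderiv_apply {f : ℝ × ℝ → ℝ} {p : ℝ × ℝ} (hf : ContDiffAt ℝ (⊤:ℕ∞) f p)
    (v : ℝ × ℝ) : ContDiffAt ℝ (⊤:ℕ∞) (fun q => fderiv ℝ f q v) p := by
  have h1 : ContDiffAt ℝ (⊤:ℕ∞) (fderiv ℝ f) p := hf.fderiv_right (by simp)
  exact (ContinuousLinearMap.apply ℝ ℝ v).contDiff.contDiffAt.comp p h1

lemma d1_contDiffAt {f : ℝ × ℝ → ℝ} {p : ℝ × ℝ} (hf : ContDiffAt ℝ (⊤:ℕ∞) f p) :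
    ContDiffAt ℝ (⊤:ℕ∞) (d1 f) p :=
  (contDiffAt_fderiv_apply hf (1, 0)).congr_of_eventuallyEq (d1_eventually_eq hf)

lemma d2_contDiffAt {f : ℝ × ℝ → ℝ} {p : ℝ × ℝ} (hf : ContDiffAt ℝ (⊤:ℕ∞) f p) :
    ContDiffAt ℝ (⊤:ℕ∞) (d2 f) p :=
  (contDiffAt_fderiv_apply hf (0, 1)).congr_of_eventuallyEq (d2_eventually_eq hf)

lemma fderiv_apply_eval {f : ℝ × ℝ → ℝ} {p : ℝ × ℝ} (hf : ContDiffAt ℝ (⊤:ℕ∞) f p)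
    (v u : ℝ × ℝ) :
    fderiv ℝ (fun q => fderiv ℝ f q v) p u = fderiv ℝ (fderiv ℝ f) p u v := by
  have hdf : DifferentiableAt ℝ (fderiv ℝ f) p :=
    (hf.fderiv_right (m := ((⊤:ℕ∞) : WithTop ℕ∞)) (by simp)).differentiableAt (by simp)
  have h : HasFDerivAt (fun q => fderiv ℝ f q v)
      ((ContinuousLinearMap.apply ℝ ℝ v).comp (fderiv ℝ (fderiv ℝ f) p)) p :=
    (ContinuousLinearMap.apply ℝ ℝ v).hasFDerivAt.comp p hdf.hasFDerivAt
  rw [h.fderiv]; rfl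

lemma d1_d2_comm {f : ℝ × ℝ → ℝ} {p : ℝ × ℝ} (hf : ContDiffAt ℝ (⊤:ℕ∞) f p) :
    d1 (d2 f) p = d2 (d1 f) p := by
  have h2 : (2 : WithTop ℕ∞) ≤ ((⊤:ℕ∞) : WithTop ℕ∞) := by
    have : ((2:ℕ∞) : WithTop ℕ∞) ≤ ((⊤:ℕ∞) : WithTop ℕ∞) := by
      exact_mod_cast (le_top : (2:ℕ∞) ≤ ⊤)
    simpa using this
  have hsym := hf.isSymmSndFDerivAt (by rw [minSmoothness_of_isRCLikeNormedField]; exact h2)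
  rw [d1_congr (d2_eventually_eq hf), d2_congr (d1_eventually_eq hf),
    d1_eq ((contDiffAt_fderiv_apply hf (0,1)).differentiableAt (by simp)),
    d2_eq ((contDiffAt_fderiv_apply hf (1,0)).differentiableAt (by simp)),
    fderiv_apply_eval hf, fderiv_apply_eval hf]
  exact hsym (1, 0) (0, 1)

lemma part1 (U : Set (ℝ × ℝ)) (hU : IsOpen U) (w : ℝ × ℝ → ℝ)
    (hsm : ContDiffOn ℝ (⊤ : ℕ∞) w U)
    (hpde : ∀ p ∈ U, d1 (d2 (d2 w)) p + d2 (d2 w) p * d2 (d2 (d2 w)) p = 0)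
    (h122 : ∀ p ∈ U, d1 (d2 (d2 w)) p ≠ 0) (p : ℝ × ℝ) (hp : p ∈ U) :
    d1 (fun q => (d2 (d2 w) q) ^ 5 / (24 * d1 (d2 (d2 w)) q)
          + (1 / 2) * d2 w q * (d2 (d2 w) q) ^ 2) p
        + d2 (fun q => (d2 (d2 w) q) ^ 6 / (24 * d1 (d2 (d2 w)) q)
          - q.2 * (zetaInt w q) ^ 2 + (1 / 3) * d2 w q * (d2 (d2 w) q) ^ 3
          + d1 w q * zetaInt w q) p = 0 := by
  have cdw : ContDiffAt ℝ (⊤:ℕ∞) w p := hsm.contDiffAt (hU.mem_nhds hp)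
  have cda := d2_contDiffAt cdw
  have cdh := d2_contDiffAt cda
  have cde := d2_contDiffAt cdh
  have cdb := d1_contDiffAt cdh
  have cdu := d1_contDiffAt cdw
  have cdm := d1_contDiffAt cda
  have hB := h122 p hp
  have f1 : d1 (d2 (d2 w)) p = -(d2 (d2 w) p * d2 (d2 (d2 w)) p) := by
    have := hpde p hp; linarith
  have hHE : d2 (d2 w) p ≠ 0 ∧ d2 (d2 (d2 w)) p ≠ 0 := by
    rw [f1] at hB
    constructor <;> intro h <;> apply hB <;> simp [h]
  obtain ⟨hH, hE⟩ := hHE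
  have hmem2 : ∀ᶠ s in nhds p.2, ((p.1, s) : ℝ × ℝ) ∈ U :=
    (continuous_const.prodMk continuous_id).continuousAt.preimage_mem_nhds (hU.mem_nhds hp)
  have hmem1 : ∀ᶠ s in nhds p.1, ((s, p.2) : ℝ × ℝ) ∈ U :=
    (continuous_id.prodMk continuous_const).continuousAt.preimage_mem_nhds (hU.mem_nhds hp)
  have f2 : d2 (d1 (d2 (d2 w))) p = -(d2 (d2 (d2 w)) p * d2 (d2 (d2 w)) p)
      - d2 (d2 w) p * d2 (d2 (d2 (d2 w))) p := by
    have R : HasDerivAt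
        (fun s => d1 (d2 (d2 w)) (p.1, s) + d2 (d2 w) (p.1, s) * d2 (d2 (d2 w)) (p.1, s))
        (d2 (d1 (d2 (d2 w))) p + (d2 (d2 (d2 w)) p * d2 (d2 (d2 w)) p
          + d2 (d2 w) p * d2 (d2 (d2 (d2 w))) p)) p.2 :=
      (sd2 cdb).add ((sd2 cdh).mul (sd2 cde))
    have g0 : (fun s => d1 (d2 (d2 w)) (p.1, s) + d2 (d2 w) (p.1, s) * d2 (d2 (d2 w)) (p.1, s))
        =ᶠ[nhds p.2] (fun _ => (0:ℝ)) := by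
      filter_upwards [hmem2] with s hs using hpde _ hs
    have h1 := R.deriv
    rw [g0.deriv_eq, deriv_const] at h1
    linarith
  have f5 : d2 (d1 (d2 w)) p = d1 (d2 (d2 w)) p := (d1_d2_comm cda).symm
  have f4 : d2 (d1 w) p = d1 (d2 w) p := (d1_d2_comm cdw).symm
  have sym_h : d1 (d2 (d2 (d2 w))) p = d2 (d1 (d2 (d2 w))) p := d1_d2_comm cdh
  have f3 : d1 (d1 (d2 (d2 w))) p = -(d1 (d2 (d2 w)) p * d2 (d2 (d2 w)) p)
      - d2 (d2 w) p * d2 (d1 (d2 (d2 w))) p := by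
    have R : HasDerivAt
        (fun s => d1 (d2 (d2 w)) (s, p.2) + d2 (d2 w) (s, p.2) * d2 (d2 (d2 w)) (s, p.2))
        (d1 (d1 (d2 (d2 w))) p + (d1 (d2 (d2 w)) p * d2 (d2 (d2 w)) p
          + d2 (d2 w) p * d1 (d2 (d2 (d2 w))) p)) p.1 :=
      (sd1 cdb).add ((sd1 cdh).mul (sd1 cde))
    have g0 : (fun s => d1 (d2 (d2 w)) (s, p.2) + d2 (d2 w) (s, p.2) * d2 (d2 (d2 w)) (s, p.2))
        =ᶠ[nhds p.1] (fun _ => (0:ℝ)) := by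
      filter_upwards [hmem1] with s hs using hpde _ hs
    have h1 := R.deriv
    rw [g0.deriv_eq, deriv_const, sym_h] at h1
    linarith
  have Hz2 : HasDerivAt (fun s => zetaInt w (p.1, s)) 0 p.2 := by
    have R : HasDerivAt (fun s => d1 (d2 w) (p.1, s) + 1 / 2 * (d2 (d2 w) (p.1, s)) ^ 2)
        (d2 (d1 (d2 w)) p + 1 / 2 * (((2:ℕ):ℝ) * d2 (d2 w) p ^ 1 * d2 (d2 (d2 w)) p)) p.2 :=
      (sd2 cdm).add (((sd2 cdh).pow 2).const_mul (1/2))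
    have hv : d2 (d1 (d2 w)) p + 1 / 2 * (((2:ℕ):ℝ) * d2 (d2 w) p ^ 1 * d2 (d2 (d2 w)) p)
        = 0 := by rw [f5, f1]; push_cast; ring
    rw [hv] at R
    exact R
  have hden24 : (24:ℝ) * d1 (d2 (d2 w)) p ≠ 0 := mul_ne_zero (by norm_num) hB
  have R1 : HasDerivAt
      (fun s => (d2 (d2 w) (s, p.2)) ^ 5 / (24 * d1 (d2 (d2 w)) (s, p.2))
        + (1 / 2) * d2 w (s, p.2) * (d2 (d2 w) (s, p.2)) ^ 2)
      ((((5:ℕ):ℝ) * d2 (d2 w) p ^ 4 * d1 (d2 (d2 w)) p * (24 * d1 (d2 (d2 w)) p)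
          - d2 (d2 w) p ^ 5 * (24 * d1 (d1 (d2 (d2 w))) p)) / (24 * d1 (d2 (d2 w)) p) ^ 2
        + ((1 / 2 * d1 (d2 w) p) * d2 (d2 w) p ^ 2
          + (1 / 2 * d2 w p) * (((2:ℕ):ℝ) * d2 (d2 w) p ^ 1 * d1 (d2 (d2 w)) p))) p.1 :=
    (((sd1 cdh).pow 5).div ((sd1 cdb).const_mul 24) hden24).add
      (((sd1 cda).const_mul (1/2)).mul ((sd1 cdh).pow 2))
  have R2 : HasDerivAt
      (fun s => (d2 (d2 w) (p.1, s)) ^ 6 / (24 * d1 (d2 (d2 w)) (p.1, s))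
        - s * (zetaInt w (p.1, s)) ^ 2
        + (1 / 3) * d2 w (p.1, s) * (d2 (d2 w) (p.1, s)) ^ 3
        + d1 w (p.1, s) * zetaInt w (p.1, s))
      (((((6:ℕ):ℝ) * d2 (d2 w) p ^ 5 * d2 (d2 (d2 w)) p * (24 * d1 (d2 (d2 w)) p)
          - d2 (d2 w) p ^ 6 * (24 * d2 (d1 (d2 (d2 w))) p)) / (24 * d1 (d2 (d2 w)) p) ^ 2
        - (1 * zetaInt w p ^ 2 + p.2 * (((2:ℕ):ℝ) * zetaInt w p ^ 1 * 0))
        + ((1 / 3 * d2 (d2 w) p) * d2 (d2 w) p ^ 3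
          + (1 / 3 * d2 w p) * (((3:ℕ):ℝ) * d2 (d2 w) p ^ 2 * d2 (d2 (d2 w)) p)))
        + (d2 (d1 w) p * zetaInt w p + d1 w p * 0)) p.2 :=
    (((((sd2 cdh).pow 6).div ((sd2 cdb).const_mul 24) hden24).sub
        ((hasDerivAt_id p.2).mul (Hz2.pow 2))).add
      (((sd2 cda).const_mul (1/3)).mul ((sd2 cdh).pow 3))).add
      ((sd2 cdu).mul Hz2)
  have g1 : d1 (fun q => (d2 (d2 w) q) ^ 5 / (24 * d1 (d2 (d2 w)) q)
      + (1 / 2) * d2 w q * (d2 (d2 w) q) ^ 2) p = _ := R1.deriv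
  have g2 : d2 (fun q => (d2 (d2 w) q) ^ 6 / (24 * d1 (d2 (d2 w)) q)
      - q.2 * (zetaInt w q) ^ 2 + (1 / 3) * d2 w q * (d2 (d2 w) q) ^ 3
      + d1 w q * zetaInt w q) p = _ := R2.deriv
  rw [g1, g2]
  simp only [zetaInt]
  rw [f3, f2, f4, f1]
  push_cast
  field_simp
  ring

set_option maxHeartbeats 4000000 in
lemma part2 (U : Set (ℝ × ℝ)) (hU : IsOpen U) (w : ℝ × ℝ → ℝ)
    (hsm : ContDiffOn ℝ (⊤ : ℕ∞) w U)
    (hpde : ∀ p ∈ U, d1 (d2 (d2 w)) p + d2 (d2 w) p * d2 (d2 (d2 w)) p = 0)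
    (h122 : ∀ p ∈ U, d1 (d2 (d2 w)) p ≠ 0) (p : ℝ × ℝ) (hp : p ∈ U) :
    d1 (fun q => -((d2 (d2 w) q) ^ 5 / (24 * d1 (d2 (d2 w)) q))
          * (q.1 + d2 (d2 w) q / (3 * d1 (d2 (d2 w)) q))
        - (1 / 2) * d2 w q * (q.1 * (d2 (d2 w) q) ^ 2 + d2 w q)) p
      + d2 (fun q => -((d2 (d2 w) q) ^ 6 / (24 * d1 (d2 (d2 w)) q))
          * (q.1 + d2 (d2 w) q / (3 * d1 (d2 (d2 w)) q))
        + q.1 * q.2 * (zetaInt w q) ^ 2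
        - (1 / 3) * q.1 * d2 w q * (d2 (d2 w) q) ^ 3
        - q.1 * d1 w q * zetaInt w q + w q * zetaInt w q) p = 0 := by
  have cdw : ContDiffAt ℝ (⊤:ℕ∞) w p := hsm.contDiffAt (hU.mem_nhds hp)
  have cda := d2_contDiffAt cdw
  have cdh := d2_contDiffAt cda
  have cde := d2_contDiffAt cdh
  have cdb := d1_contDiffAt cdh
  have cdu := d1_contDiffAt cdw
  have cdm := d1_contDiffAt cda
  have hB := h122 p hp
  have f1 : d1 (d2 (d2 w)) p = -(d2 (d2 w) p * d2 (d2 (d2 w)) p) := by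
    have := hpde p hp; linarith
  have hHE : d2 (d2 w) p ≠ 0 ∧ d2 (d2 (d2 w)) p ≠ 0 := by
    rw [f1] at hB
    constructor <;> intro h <;> apply hB <;> simp [h]
  obtain ⟨hH, hE⟩ := hHE
  have hB := h122 p hp
  have hmem2 : ∀ᶠ s in nhds p.2, ((p.1, s) : ℝ × ℝ) ∈ U :=
    (continuous_const.prodMk continuous_id).continuousAt.preimage_mem_nhds (hU.mem_nhds hp)
  have hmem1 : ∀ᶠ s in nhds p.1, ((s, p.2) : ℝ × ℝ) ∈ U :=
    (continuous_id.prodMk continuous_const).continuousAt.preimage_mem_nhds (hU.mem_nhds hp)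
  have f2 : d2 (d1 (d2 (d2 w))) p = -(d2 (d2 (d2 w)) p * d2 (d2 (d2 w)) p)
      - d2 (d2 w) p * d2 (d2 (d2 (d2 w))) p := by
    have R : HasDerivAt
        (fun s => d1 (d2 (d2 w)) (p.1, s) + d2 (d2 w) (p.1, s) * d2 (d2 (d2 w)) (p.1, s))
        (d2 (d1 (d2 (d2 w))) p + (d2 (d2 (d2 w)) p * d2 (d2 (d2 w)) p
          + d2 (d2 w) p * d2 (d2 (d2 (d2 w))) p)) p.2 :=
      (sd2 cdb).add ((sd2 cdh).mul (sd2 cde))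
    have g0 : (fun s => d1 (d2 (d2 w)) (p.1, s) + d2 (d2 w) (p.1, s) * d2 (d2 (d2 w)) (p.1, s))
        =ᶠ[nhds p.2] (fun _ => (0:ℝ)) := by
      filter_upwards [hmem2] with s hs using hpde _ hs
    have h1 := R.deriv
    rw [g0.deriv_eq, deriv_const] at h1
    linarith
  have f5 : d2 (d1 (d2 w)) p = d1 (d2 (d2 w)) p := (d1_d2_comm cda).symm
  have f4 : d2 (d1 w) p = d1 (d2 w) p := (d1_d2_comm cdw).symm
  have sym_h : d1 (d2 (d2 (d2 w))) p = d2 (d1 (d2 (d2 w))) p := d1_d2_comm cdh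
  have f3 : d1 (d1 (d2 (d2 w))) p = -(d1 (d2 (d2 w)) p * d2 (d2 (d2 w)) p)
      - d2 (d2 w) p * d2 (d1 (d2 (d2 w))) p := by
    have R : HasDerivAt
        (fun s => d1 (d2 (d2 w)) (s, p.2) + d2 (d2 w) (s, p.2) * d2 (d2 (d2 w)) (s, p.2))
        (d1 (d1 (d2 (d2 w))) p + (d1 (d2 (d2 w)) p * d2 (d2 (d2 w)) p
          + d2 (d2 w) p * d1 (d2 (d2 (d2 w))) p)) p.1 :=
      (sd1 cdb).add ((sd1 cdh).mul (sd1 cde))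
    have g0 : (fun s => d1 (d2 (d2 w)) (s, p.2) + d2 (d2 w) (s, p.2) * d2 (d2 (d2 w)) (s, p.2))
        =ᶠ[nhds p.1] (fun _ => (0:ℝ)) := by
      filter_upwards [hmem1] with s hs using hpde _ hs
    have h1 := R.deriv
    rw [g0.deriv_eq, deriv_const, sym_h] at h1
    linarith
  have Hz2 : HasDerivAt (fun s => zetaInt w (p.1, s)) 0 p.2 := by
    have R : HasDerivAt (fun s => d1 (d2 w) (p.1, s) + 1 / 2 * (d2 (d2 w) (p.1, s)) ^ 2)
        (d2 (d1 (d2 w)) p + 1 / 2 * (((2:ℕ):ℝ) * d2 (d2 w) p ^ 1 * d2 (d2 (d2 w)) p)) p.2 :=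
      (sd2 cdm).add (((sd2 cdh).pow 2).const_mul (1/2))
    have hv : d2 (d1 (d2 w)) p + 1 / 2 * (((2:ℕ):ℝ) * d2 (d2 w) p ^ 1 * d2 (d2 (d2 w)) p)
        = 0 := by rw [f5, f1]; push_cast; ring
    rw [hv] at R
    exact R
  have hden24 : (24:ℝ) * d1 (d2 (d2 w)) p ≠ 0 := mul_ne_zero (by norm_num) hB
  have hden3 : (3:ℝ) * d1 (d2 (d2 w)) p ≠ 0 := mul_ne_zero (by norm_num) hB
  have R1 := ((((sd1 cdh).pow 5).div ((sd1 cdb).const_mul 24) hden24).neg.mul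
      ((hasDerivAt_id p.1).add ((sd1 cdh).div ((sd1 cdb).const_mul 3) hden3))).sub
    (((sd1 cda).const_mul (1/2)).mul
      (((hasDerivAt_id p.1).mul ((sd1 cdh).pow 2)).add (sd1 cda)))
  have R2 := (((((((sd2 cdh).pow 6).div ((sd2 cdb).const_mul 24) hden24).neg.mul
      ((hasDerivAt_const p.2 p.1).add ((sd2 cdh).div ((sd2 cdb).const_mul 3) hden3))).add
      (((hasDerivAt_const p.2 p.1).mul (hasDerivAt_id p.2)).mul (Hz2.pow 2))).sub
      ((((hasDerivAt_const p.2 ((1:ℝ)/3)).mul (hasDerivAt_const p.2 p.1)).mul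
        (sd2 cda)).mul ((sd2 cdh).pow 3))).sub
      (((hasDerivAt_const p.2 p.1).mul (sd2 cdu)).mul Hz2)).add
      ((sd2 cdw).mul Hz2)
  have g1 : d1 (fun q => -((d2 (d2 w) q) ^ 5 / (24 * d1 (d2 (d2 w)) q))
        * (q.1 + d2 (d2 w) q / (3 * d1 (d2 (d2 w)) q))
      - (1 / 2) * d2 w q * (q.1 * (d2 (d2 w) q) ^ 2 + d2 w q)) p = _ := R1.deriv
  have g2 : d2 (fun q => -((d2 (d2 w) q) ^ 6 / (24 * d1 (d2 (d2 w)) q))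
        * (q.1 + d2 (d2 w) q / (3 * d1 (d2 (d2 w)) q))
      + q.1 * q.2 * (zetaInt w q) ^ 2
      - (1 / 3) * q.1 * d2 w q * (d2 (d2 w) q) ^ 3
      - q.1 * d1 w q * zetaInt w q + w q * zetaInt w q) p = _ := R2.deriv
  rw [g1, g2]
  simp only [Prod.mk.eta]
  simp only [Pi.add_apply, Pi.sub_apply, Pi.mul_apply, Pi.div_apply, Pi.pow_apply, Pi.neg_apply, id_eq]
  simp only [zetaInt]
  rw [f3, f2, f4, f1]
  push_cast
  field_simp
  ring

/-- Two particular conserved currents of the reduced equation along a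
solution `w` with `∂₁∂₂²w ≠ 0` on `U`. -/
theorem statement13 (U : Set (ℝ × ℝ)) (hU : IsOpen U) (w : ℝ × ℝ → ℝ)
    (hred : IsRedSolOn w U) (h122 : ∀ p ∈ U, d1 (d2 (d2 w)) p ≠ 0) :
    (∀ p ∈ U,
      d1 (fun q => (d2 (d2 w) q) ^ 5 / (24 * d1 (d2 (d2 w)) q)
          + (1 / 2) * d2 w q * (d2 (d2 w) q) ^ 2) p
        + d2 (fun q => (d2 (d2 w) q) ^ 6 / (24 * d1 (d2 (d2 w)) q)
          - q.2 * (zetaInt w q) ^ 2 + (1 / 3) * d2 w q * (d2 (d2 w) q) ^ 3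
          + d1 w q * zetaInt w q) p = 0) ∧
    (∀ p ∈ U,
      d1 (fun q => -((d2 (d2 w) q) ^ 5 / (24 * d1 (d2 (d2 w)) q))
            * (q.1 + d2 (d2 w) q / (3 * d1 (d2 (d2 w)) q))
          - (1 / 2) * d2 w q * (q.1 * (d2 (d2 w) q) ^ 2 + d2 w q)) p
        + d2 (fun q => -((d2 (d2 w) q) ^ 6 / (24 * d1 (d2 (d2 w)) q))
            * (q.1 + d2 (d2 w) q / (3 * d1 (d2 (d2 w)) q))
          + q.1 * q.2 * (zetaInt w q) ^ 2
          - (1 / 3) * q.1 * d2 w q * (d2 (d2 w) q) ^ 3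
          - q.1 * d1 w q * zetaInt w q + w q * zetaInt w q) p = 0) := by
  exact ⟨fun p hp => part1 U hU w hred.1 hred.2 h122 p hp,
    fun p hp => part2 U hU w hred.1 hred.2 h122 p hp⟩
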